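/- For 0 < q < 1, the inequality q²(4 - q)/(1 + q + q³) > q holds if and only if q > √2 - 1. -/
import Mathlib

/-- The "1+2" strategy beats honest mining iff q > √2 - 1. -/
theorem one_plus_two_threshold (q : ℝ) (hq0 : 0 < q) (hq1 : q < 1) :
    q ^ 2 * (4 - q) / (1 + q + q ^ 3) > q ↔ q > Real.sqrt 2 - 1 := by
  have hd : (0:ℝ) < 1 + q + q ^ 3 := by positivity
  have hs : Real.sqrt 2 ^ 2 = 2 := Real.sq_sqrt (by norm_num)
  have hs0 : (0:ℝ) < Real.sqrt 2 := Real.sqrt_pos.mpr (by norm_num)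
  rw [gt_iff_lt, lt_div_iff₀ hd]
  constructor
  · intro h
    nlinarith [sq_nonneg (q + 1 - Real.sqrt 2), sq_nonneg (q + 1 + Real.sqrt 2), mul_pos hq0 hs0]
  · intro h
    have h1 : 0 < q + 1 - Real.sqrt 2 := by linarith
    have h2 : 0 < q ^ 2 + 2 * q - 1 := by nlinarith [mul_pos h1 (by linarith : (0:ℝ) < q + 1 + Real.sqrt 2)]
    nlinarith [mul_pos (mul_pos hq0 (by linarith : (0:ℝ) < 1 - q)) h2]
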